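/- If the step sizes (ρ_t)_{t≥1} are positive and nonincreasing, then for every t ≥ 1 the averaged primal iterate x̄_t = (1/t) Σ_{u=0}^{t−1} x_u and averaged dual candidate ȳ_t = (1/t) Σ_{u=0}^{t−1} y_u satisfy gap(x̄_t, ȳ_t) = f(A x̄_t) + σ(−Aᵀ ȳ_t) + f*(ȳ_t) ≤ δ²/(t ρ_t) + (R²/(2t)) Σ_{u=1}^t ρ_u. -/

import Mathlib

open scoped RealInnerProductSpace
open Finset

noncomputable section

/-- `y` is a subgradient of `f` at `z`. -/
def IsSubgrad {n : ℕ} (f : EuclideanSpace ℝ (Fin n) → ℝ)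
    (z y : EuclideanSpace ℝ (Fin n)) : Prop :=
  ∀ z', f z + ⟪y, z' - z⟫ ≤ f z'

/-- Bregman divergence of a differentiable function `h` with gradient `h'`. -/
def Dbreg {p : ℕ} (h : EuclideanSpace ℝ (Fin p) → ℝ)
    (h' : EuclideanSpace ℝ (Fin p) → EuclideanSpace ℝ (Fin p))
    (x₁ x₂ : EuclideanSpace ℝ (Fin p)) : ℝ :=
  h x₁ - h x₂ - ⟪x₁ - x₂, h' x₂⟫

/-- Fenchel conjugate of `f`, with values in `EReal`. -/
def fstarE {n : ℕ} (f : EuclideanSpace ℝ (Fin n) → ℝ)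
    (y : EuclideanSpace ℝ (Fin n)) : EReal :=
  ⨆ z, ((⟪y, z⟫ - f z : ℝ) : EReal)

private lemma deriv_le_of_slope {ψ : ℝ → ℝ} {c C M : ℝ} (hd : HasDerivAt ψ c 0)
    (hb : ∀ s : ℝ, s ∈ Set.Ioo (0:ℝ) 1 → ψ s - ψ 0 ≤ s * (C + s * M)) : c ≤ C := by
  have hslope : Filter.Tendsto (slope ψ 0) (nhdsWithin 0 (Set.Ioi 0)) (nhds c) :=
    (hasDerivAt_iff_tendsto_slope.mp hd).mono_left
      (nhdsWithin_mono _ fun s hs => ne_of_gt hs)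
  have hlin : Filter.Tendsto (fun s : ℝ => C + s * M) (nhdsWithin 0 (Set.Ioi 0)) (nhds C) := by
    have h0 : Filter.Tendsto (fun s : ℝ => C + s * M) (nhds 0) (nhds (C + 0 * M)) :=
      (continuous_const.add (continuous_id.mul continuous_const)).tendsto 0
    simpa using h0.mono_left nhdsWithin_le_nhds
  refine le_of_tendsto_of_tendsto hslope hlin ?_
  filter_upwards [Ioo_mem_nhdsGT_of_mem (Set.left_mem_Ico.mpr one_pos)] with s hs
  have hs0 : 0 < s := hs.1
  rw [slope_def_field]
  rw [sub_zero, div_le_iff₀ hs0]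
  have := hb s hs
  nlinarith [this]

private lemma le_deriv_of_min {ψ : ℝ → ℝ} {c : ℝ} (hd : HasDerivAt ψ c 0)
    (hb : ∀ s : ℝ, s ∈ Set.Ioo (0:ℝ) 1 → ψ 0 ≤ ψ s) : 0 ≤ c := by
  have := deriv_le_of_slope (ψ := fun s => -ψ s) (c := -c) (C := 0) (M := 0) hd.neg
    (fun s hs => by simpa using by linarith [hb s hs])
  linarith

private lemma hasDerivAt_line {E : Type*} [NormedAddCommGroup E] [InnerProductSpace ℝ E]
    [CompleteSpace E] {φ : E → ℝ} {g : E} {z : E} (hφ : HasGradientAt φ g z) (d : E) :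
    HasDerivAt (fun s : ℝ => φ (z + s • d)) (⟪g, d⟫) 0 := by
  have hline : HasDerivAt (fun s : ℝ => z + s • d) d 0 := by
    simpa using ((hasDerivAt_id (0:ℝ)).smul_const d).const_add z
  have hF : HasFDerivAt φ (InnerProductSpace.toDual ℝ E g) ((fun s : ℝ => z + s • d) 0) := by
    simpa using hφ.hasFDerivAt
  simpa [InnerProductSpace.toDual_apply_apply, Function.comp_def] using hF.comp_hasDerivAt 0 hline

private lemma breg_half_sq {p : ℕ} {h : EuclideanSpace ℝ (Fin p) → ℝ}
    {h' : EuclideanSpace ℝ (Fin p) → EuclideanSpace ℝ (Fin p)}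
    (hsc : StrongConvexOn Set.univ 1 h) (hdiff : ∀ x, HasGradientAt h (h' x) x)
    (x₁ x₂ : EuclideanSpace ℝ (Fin p)) :
    ‖x₁ - x₂‖ ^ 2 / 2 ≤ Dbreg h h' x₁ x₂ := by
  have hd := hasDerivAt_line (hdiff x₂) (x₁ - x₂)
  have key : ⟪h' x₂, x₁ - x₂⟫ ≤ h x₁ - h x₂ - ‖x₁ - x₂‖ ^ 2 / 2 := by
    refine deriv_le_of_slope (M := ‖x₁ - x₂‖ ^ 2 / 2) hd fun s hs => ?_
    obtain ⟨-, hsc2⟩ := hsc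
    have hcvx := hsc2 (Set.mem_univ x₂) (Set.mem_univ x₁)
      (a := 1 - s) (b := s) (by linarith [hs.2]) hs.1.le (by ring)
    have hpt : (1 - s) • x₂ + s • x₁ = x₂ + s • (x₁ - x₂) := by module
    rw [hpt] at hcvx
    simp only [smul_eq_mul] at hcvx
    rw [norm_sub_rev x₂ x₁] at hcvx
    simp only [zero_smul, add_zero]
    nlinarith [hcvx]
  simp only [Dbreg]
  rw [real_inner_comm]
  linarith

private lemma step_bound {p : ℕ}
    {h : EuclideanSpace ℝ (Fin p) → ℝ}
    {h' : EuclideanSpace ℝ (Fin p) → EuclideanSpace ℝ (Fin p)}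
    (hsc : StrongConvexOn Set.univ 1 h) (hdiff : ∀ x, HasGradientAt h (h' x) x)
    {K : Set (EuclideanSpace ℝ (Fin p))} (hKconv : Convex ℝ K)
    {xu xp : EuclideanSpace ℝ (Fin p)} (hxp : xp ∈ K)
    {gu : EuclideanSpace ℝ (Fin p)} {ρ' R : ℝ} (hρ : 0 < ρ')
    (hgR : ‖gu‖ ≤ R)
    (hminu : ∀ x' ∈ K, 1/ρ' * Dbreg h h' xp xu + ⟪xp - xu, gu⟫ ≤
       1/ρ' * Dbreg h h' x' xu + ⟪x' - xu, gu⟫)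
    {x' : EuclideanSpace ℝ (Fin p)} (hx' : x' ∈ K) :
    ⟪gu, xu - x'⟫ ≤ 1/ρ' * (Dbreg h h' x' xu - Dbreg h h' x' xp) + ρ' * R^2 / 2 := by
  set d := x' - xp with hd
  have h1 : HasDerivAt (fun s : ℝ => h (xp + s • d)) (⟪h' xp, d⟫) 0 :=
    hasDerivAt_line (hdiff xp) d
  have h2 : ∀ v : EuclideanSpace ℝ (Fin p),
      HasDerivAt (fun s : ℝ => ⟪xp + s • d - xu, v⟫) (⟪d, v⟫) 0 := by
    intro v
    have base : HasDerivAt (fun s : ℝ => ⟪xp - xu, v⟫ + s * ⟪d, v⟫) (⟪d, v⟫) 0 := by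
      simpa using ((hasDerivAt_id (0:ℝ)).mul_const (⟪d, v⟫)).const_add (⟪xp - xu, v⟫)
    refine HasDerivAt.congr_of_eventuallyEq base (Filter.Eventually.of_forall fun s => ?_)
    show ⟪xp + s • d - xu, v⟫ = ⟪xp - xu, v⟫ + s * ⟪d, v⟫
    have heq : xp + s • d - xu = (xp - xu) + s • d := by abel
    rw [heq, inner_add_left, real_inner_smul_left]
  have hψ : HasDerivAt
      (fun s : ℝ => 1/ρ' * Dbreg h h' (xp + s • d) xu + ⟪xp + s • d - xu, gu⟫)
      (1/ρ' * (⟪h' xp, d⟫ - ⟪d, h' xu⟫) + ⟪d, gu⟫) 0 := by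
    simp only [Dbreg]
    exact (HasDerivAt.const_mul (1/ρ') ((h1.sub_const (h xu)).sub (h2 (h' xu)))).add (h2 gu)
  have hopt : 0 ≤ 1/ρ' * (⟪h' xp, d⟫ - ⟪d, h' xu⟫) + ⟪d, gu⟫ := by
    refine le_deriv_of_min hψ fun s hs => ?_
    have hq : xp + s • d ∈ K := by
      have heq : xp + s • d = (1 - s) • xp + s • x' := by rw [hd]; module
      rw [heq]
      exact hKconv hxp hx' (by linarith [hs.2]) hs.1.le (by ring)
    simpa using hminu _ hq
  have h3pt : Dbreg h h' x' xu - Dbreg h h' x' xp - Dbreg h h' xp xu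
      = ⟪d, h' xp⟫ - ⟪d, h' xu⟫ := by
    simp only [Dbreg, hd, inner_sub_left]; ring
  have hswap : ⟪h' xp, d⟫ = ⟪d, h' xp⟫ := real_inner_comm _ _
  have h4 : -⟪d, gu⟫ ≤ 1/ρ' *
      (Dbreg h h' x' xu - Dbreg h h' x' xp - Dbreg h h' xp xu) := by
    rw [h3pt, ← hswap]; linarith [hopt]
  have hmul : -⟪d, gu⟫ ≤
      (Dbreg h h' x' xu - Dbreg h h' x' xp - Dbreg h h' xp xu) / ρ' := by
    rw [div_eq_inv_mul, ← one_div]; exact h4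
  have hsplit : ⟪gu, xu - x'⟫ = ⟪gu, xu - xp⟫ + ⟪gu, xp - x'⟫ := by
    rw [← inner_add_right]
    congr 1
    abel
  have hga : ⟪gu, xu - xp⟫ ≤ R * ‖xu - xp‖ :=
    le_trans (real_inner_le_norm _ _) (mul_le_mul_of_nonneg_right hgR (norm_nonneg _))
  have hgd : ⟪gu, xp - x'⟫ = -⟪d, gu⟫ := by
    rw [real_inner_comm, hd]
    have : xp - x' = -(x' - xp) := by abel
    rw [this, inner_neg_left]
  have hdstep : ‖xu - xp‖^2/2 ≤ Dbreg h h' xp xu := by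
    rw [norm_sub_rev]; exact breg_half_sq hsc hdiff xp xu
  have hstepdiv : ‖xu - xp‖^2/2/ρ' ≤ Dbreg h h' xp xu / ρ' := by gcongr
  have hams : R * ‖xu - xp‖ ≤ ‖xu - xp‖^2/2/ρ' + ρ' * R^2/2 := by
    set a := ‖xu - xp‖
    have key : 0 ≤ (a - ρ'*R)^2 / (2*ρ') := by positivity
    have expand : (a - ρ'*R)^2/(2*ρ') = a^2/2/ρ' + ρ'*R^2/2 - R*a := by
      field_simp; ring
    linarith [expand ▸ key]
  have hlast : 1/ρ' * (Dbreg h h' x' xu - Dbreg h h' x' xp)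
      = (Dbreg h h' x' xu - Dbreg h h' x' xp) / ρ' := one_div_mul_eq_div _ _
  rw [hsplit, hlast]
  have hsub : (Dbreg h h' x' xu - Dbreg h h' x' xp - Dbreg h h' xp xu) / ρ'
      = (Dbreg h h' x' xu - Dbreg h h' x' xp)/ρ' - Dbreg h h' xp xu / ρ' := by
    rw [← sub_div]
  linarith [hmul, hga, hgd ▸ hmul, hstepdiv, hams, hsub ▸ hmul]

private lemma avg_arith {T r S d R : ℝ} (hT : 0 < T) (hr : 0 < r) :
    (1/T) * (d^2 * (1/r) + R^2/2 * S) = d^2/(T*r) + R^2/(2*T)*S := by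
  field_simp

set_option maxHeartbeats 2000000 in
/-- Primal-dual convergence of averaged mirror descent iterates over a compact set, for
positive nonincreasing step sizes. -/
theorem mirror_descent_averaged_gap {p n : ℕ}
    (A : EuclideanSpace ℝ (Fin p) →L[ℝ] EuclideanSpace ℝ (Fin n))
    (f : EuclideanSpace ℝ (Fin n) → ℝ)
    (hf : ConvexOn ℝ Set.univ f)
    (K : Set (EuclideanSpace ℝ (Fin p)))
    (hKcpt : IsCompact K) (hKconv : Convex ℝ K)
    (h : EuclideanSpace ℝ (Fin p) → ℝ)
    (h' : EuclideanSpace ℝ (Fin p) → EuclideanSpace ℝ (Fin p))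
    (hdiff : ∀ x, HasGradientAt h (h' x) x)
    (hsc : StrongConvexOn Set.univ 1 h)
    (x : ℕ → EuclideanSpace ℝ (Fin p))
    (y : ℕ → EuclideanSpace ℝ (Fin n))
    (ρ : ℕ → ℝ)
    (hxK : ∀ t, x t ∈ K)
    (hsub : ∀ t, IsSubgrad f (A (x t)) (y t))
    (hmin : ∀ t, 1 ≤ t → ∀ x' ∈ K,
      1 / ρ t * Dbreg h h' (x t) (x (t - 1)) +
          ⟪x t - x (t - 1), (ContinuousLinearMap.adjoint A) (y (t - 1))⟫ ≤
        1 / ρ t * Dbreg h h' x' (x (t - 1)) +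
          ⟪x' - x (t - 1), (ContinuousLinearMap.adjoint A) (y (t - 1))⟫)
    (δ : ℝ)
    (hD : ∀ x₁ ∈ K, ∀ x₂ ∈ K, Dbreg h h' x₁ x₂ ≤ δ ^ 2)
    (R : ℝ)
    (hR : ∀ z y', IsSubgrad f z y' → ‖(ContinuousLinearMap.adjoint A) y'‖ ≤ R)
    (σ : EuclideanSpace ℝ (Fin p) → ℝ)
    (hσ : ∀ z, IsGreatest ((fun x' => ⟪z, x'⟫) '' K) (σ z))
    (hδ0 : 0 ≤ δ) (hR0 : 0 ≤ R)
    (hρpos : ∀ t, 1 ≤ t → 0 < ρ t)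
    (hρmono : ∀ t, 1 ≤ t → ρ (t + 1) ≤ ρ t) :
    ∀ t : ℕ, 1 ≤ t →
      ((f (A ((1 / (t : ℝ)) • ∑ u ∈ range t, x u)) +
          σ (-((ContinuousLinearMap.adjoint A) ((1 / (t : ℝ)) • ∑ u ∈ range t, y u))) : ℝ)
          : EReal) +
        fstarE f ((1 / (t : ℝ)) • ∑ u ∈ range t, y u) ≤
      ((δ ^ 2 / ((t : ℝ) * ρ t) + R ^ 2 / (2 * (t : ℝ)) * ∑ u ∈ Finset.Icc 1 t, ρ u : ℝ)
          : EReal) := by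
  intro t ht
  have ht0 : (0:ℝ) < (t : ℝ) := by exact_mod_cast Nat.lt_of_lt_of_le Nat.zero_lt_one ht
  set Ad := ContinuousLinearMap.adjoint A with hAd
  clear_value Ad
  -- per step bound
  have step : ∀ u : ℕ, ∀ x' ∈ K, ⟪Ad (y u), x u - x'⟫ ≤
      1/ρ (u+1) * (Dbreg h h' x' (x u) - Dbreg h h' x' (x (u+1))) + ρ (u+1) * R^2/2 := by
    intro u x' hx'
    have hρu := hρpos (u+1) (Nat.le_add_left 1 u)
    have hgR : ‖Ad (y u)‖ ≤ R := hR _ _ (hsub u)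
    refine step_bound hsc hdiff hKconv (hxK (u+1)) hρu hgR ?_ hx'
    intro x'' hx''
    have H := hmin (u+1) (Nat.le_add_left 1 u) x'' hx''
    simpa [Nat.add_sub_cancel] using H
  -- telescoping
  have tel : ∀ x' ∈ K, ∀ m : ℕ, 1 ≤ m →
      ∑ u ∈ range m, (1/ρ (u+1) * (Dbreg h h' x' (x u) - Dbreg h h' x' (x (u+1))))
      ≤ δ^2 * (1/ρ m) - Dbreg h h' x' (x m) * (1/ρ m) := by
    intro x' hx'
    refine Nat.le_induction ?_ ?_
    · rw [Finset.sum_range_one]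
      have hD0 : Dbreg h h' x' (x 0) ≤ δ^2 := hD x' hx' (x 0) (hxK 0)
      have hρ1 := hρpos 1 le_rfl
      have hinv : (0:ℝ) ≤ 1/ρ 1 := by positivity
      nlinarith [mul_le_mul_of_nonneg_right hD0 hinv]
    · intro m hm IH
      rw [Finset.sum_range_succ]
      have hρm := hρpos m hm
      have hρm1 := hρpos (m+1) (le_trans hm (Nat.le_succ m))
      have hmono : 1/ρ m ≤ 1/ρ (m+1) := one_div_le_one_div_of_le hρm1 (hρmono m hm)
      have hDm : Dbreg h h' x' (x m) ≤ δ^2 := hD x' hx' (x m) (hxK m)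
      have key := mul_le_mul_of_nonneg_right hDm (sub_nonneg.mpr hmono)
      nlinarith [IH, key]
  have hρt := hρpos t ht
  -- regret bound
  have regret : ∀ x' ∈ K, ∑ u ∈ range t, ⟪Ad (y u), x u - x'⟫ ≤
      δ^2 * (1/ρ t) + R^2/2 * ∑ u ∈ Finset.Icc 1 t, ρ u := by
    intro x' hx'
    have h1 : ∑ u ∈ range t, ⟪Ad (y u), x u - x'⟫ ≤
        ∑ u ∈ range t, (1/ρ (u+1) * (Dbreg h h' x' (x u) - Dbreg h h' x' (x (u+1)))
          + ρ (u+1) * R^2/2) :=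
      Finset.sum_le_sum fun u _ => step u x' hx'
    rw [Finset.sum_add_distrib] at h1
    have h2 := tel x' hx' t ht
    have hDt : 0 ≤ Dbreg h h' x' (x t) :=
      le_trans (by positivity) (breg_half_sq hsc hdiff x' (x t))
    have hinvt : (0:ℝ) ≤ 1/ρ t := by positivity
    have h3 : ∑ u ∈ range t, ρ (u+1) * R^2/2 = R^2/2 * ∑ u ∈ Finset.Icc 1 t, ρ u := by
      have hicc : Finset.Icc 1 t = Finset.Ico 1 (t+1) := (Finset.Ico_add_one_right_eq_Icc 1 t).symm
      rw [hicc, Finset.sum_Ico_eq_sum_range, Finset.mul_sum]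
      have ht' : t + 1 - 1 = t := by omega
      rw [ht']
      exact Finset.sum_congr rfl fun u _ => by rw [add_comm 1 u]; ring
    have h4 : 0 ≤ Dbreg h h' x' (x t) * (1/ρ t) := mul_nonneg hDt hinvt
    linarith [h1, h2, h3, h4]
  -- averaged iterates
  set xb := (1 / (t : ℝ)) • ∑ u ∈ range t, x u with hxb
  set yb := (1 / (t : ℝ)) • ∑ u ∈ range t, y u with hyb
  clear_value xb yb
  obtain ⟨xσ, hxσK, hxσeq⟩ := (hσ (-(Ad yb))).1
  have hG : Ad yb = (1/(t:ℝ)) • ∑ u ∈ range t, Ad (y u) := by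
    rw [hAd, hyb, map_smul, map_sum]
  set b := δ ^ 2 / ((t : ℝ) * ρ t) + R ^ 2 / (2 * (t : ℝ)) * ∑ u ∈ Finset.Icc 1 t, ρ u with hbdef
  set c := f (A xb) + σ (-(Ad yb)) with hcdef
  clear_value b c
  have hbavg : (1/(t:ℝ)) * (δ^2 * (1/ρ t) + R^2/2 * ∑ u ∈ Finset.Icc 1 t, ρ u) = b := by
    rw [hbdef]
    exact avg_arith ht0 hρt
  have main : ∀ z, ⟪yb, z⟫ - f z ≤ b - c := by
    intro z
    have hinvt0 : (0:ℝ) ≤ 1/(t:ℝ) := by positivity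
    have jensen : f (A xb) ≤ (1/(t:ℝ)) * ∑ u ∈ range t, f (A (x u)) := by
      have hAx : A xb = ∑ u ∈ range t, (1/(t:ℝ)) • A (x u) := by
        rw [hxb, map_smul, map_sum, Finset.smul_sum]
      rw [hAx]
      have hweights : ∑ _u ∈ range t, (1/(t:ℝ)) = 1 := by
        rw [Finset.sum_const, Finset.card_range, nsmul_eq_mul]
        field_simp
      have hj := hf.map_sum_le (t := range t) (w := fun _ => 1/(t:ℝ))
        (p := fun u => A (x u)) (fun i _ => by positivity) hweights
        (fun i _ => Set.mem_univ _)
      simp only [smul_eq_mul] at hj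
      calc f (∑ u ∈ range t, (1/(t:ℝ)) • A (x u))
          ≤ ∑ u ∈ range t, (1/(t:ℝ)) * f (A (x u)) := hj
        _ = (1/(t:ℝ)) * ∑ u ∈ range t, f (A (x u)) := by rw [Finset.mul_sum]
    have hsigma : σ (-(Ad yb)) = -((1/(t:ℝ)) * ∑ u ∈ range t, ⟪Ad (y u), xσ⟫) := by
      rw [← hxσeq]
      show ⟪-(Ad yb), xσ⟫ = _
      rw [inner_neg_left, hG, real_inner_smul_left, sum_inner]
    have hyz : ⟪yb, z⟫ = (1/(t:ℝ)) * ∑ u ∈ range t, ⟪y u, z⟫ := by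
      rw [hyb, real_inner_smul_left, sum_inner]
    have hper : ∑ u ∈ range t, (⟪y u, z⟫ - f z) ≤
        ∑ u ∈ range t, (⟪Ad (y u), x u⟫ - f (A (x u))) := by
      refine Finset.sum_le_sum fun u _ => ?_
      have hs := hsub u z
      rw [inner_sub_right] at hs
      have hadj : ⟪Ad (y u), x u⟫ = ⟪y u, A (x u)⟫ := by
        rw [hAd]; exact ContinuousLinearMap.adjoint_inner_left A (x u) (y u)
      linarith [hs, hadj]
    have hsums : ∑ u ∈ range t, (⟪y u, z⟫ - f z)
        = (∑ u ∈ range t, ⟪y u, z⟫) - (t:ℝ) * f z := by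
      rw [Finset.sum_sub_distrib, Finset.sum_const, Finset.card_range, nsmul_eq_mul]
    have hsums2 : ∑ u ∈ range t, (⟪Ad (y u), x u⟫ - f (A (x u)))
        = (∑ u ∈ range t, ⟪Ad (y u), x u⟫) - ∑ u ∈ range t, f (A (x u)) :=
      Finset.sum_sub_distrib _ _
    have hsplitsum : ∑ u ∈ range t, ⟪Ad (y u), x u - xσ⟫
        = (∑ u ∈ range t, ⟪Ad (y u), x u⟫) - ∑ u ∈ range t, ⟪Ad (y u), xσ⟫ := by
      rw [← Finset.sum_sub_distrib]
      exact Finset.sum_congr rfl fun u _ => inner_sub_right _ _ _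
    have hreg := regret xσ hxσK
    set S1 := ∑ u ∈ range t, f (A (x u)) with hS1
    set S2 := ∑ u ∈ range t, ⟪Ad (y u), xσ⟫ with hS2
    set S3 := ∑ u ∈ range t, ⟪y u, z⟫ with hS3
    set S5 := ∑ u ∈ range t, ⟪Ad (y u), x u⟫ with hS5
    clear_value S1 S2 S3 S5
    have hscaled : (1/(t:ℝ)) * (S3 - (t:ℝ)*f z) ≤ (1/(t:ℝ)) * (S5 - S1) :=
      mul_le_mul_of_nonneg_left (by linarith [hper, hsums, hsums2]) hinvt0
    have hfz' : (1/(t:ℝ)) * ((t:ℝ) * f z) = f z := by field_simp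
    have hregs : (1/(t:ℝ)) * (S5 - S2) ≤
        (1/(t:ℝ)) * (δ^2*(1/ρ t) + R^2/2 * ∑ u ∈ Finset.Icc 1 t, ρ u) :=
      mul_le_mul_of_nonneg_left (by linarith [hreg, hsplitsum]) hinvt0
    rw [hbavg] at hregs
    linarith [jensen, hsigma, hyz, hscaled, hfz', hregs, hcdef]
  have hsup : fstarE f yb ≤ ((b - c : ℝ) : EReal) :=
    iSup_le fun z => EReal.coe_le_coe_iff.mpr (main z)
  calc ((c : ℝ) : EReal) + fstarE f yb
      ≤ ((c : ℝ) : EReal) + ((b - c : ℝ) : EReal) := add_le_add_right hsup _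
    _ = ((b : ℝ) : EReal) := by
        rw [← EReal.coe_add]
        congr 1
        ring
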